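/- arXiv:1111.0207 — 3 statements merged into one kernel-verified Lean document; each statement's English description precedes it below -/
import Mathlib

section
/- For α ∈ (0,1), the double integral D(α) = ∫_0^1 ∫_0^1 (a/(1-α) + b^{-α}(1-a))^{-2} db da equals (1-α)/(1+α). -/
open Real

open MeasureTheory Set Function

lemma aux_zpow_neg_two (x : ℝ) : x ^ (-2 : ℤ) = ((x) ^ 2)⁻¹ := by
  rw [show ((-2 : ℤ)) = -(2 : ℕ) by norm_num, zpow_neg, zpow_natCast]

lemma aux_pos (t q : ℝ) (ht : 0 < t) (hs : 0 < t + q) {a : ℝ}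
    (h0 : 0 ≤ a) (h1 : a ≤ 1) : 0 < t + q * a := by
  have key : min t (t + q) ≤ t + q * a := by
    have : min t (t + q) = min t (t + q) * (1 - a) + min t (t + q) * a := by ring
    rw [this]
    have h2 : min t (t + q) * (1 - a) ≤ t * (1 - a) :=
      mul_le_mul_of_nonneg_right (min_le_left _ _) (by linarith)
    have h3 : min t (t + q) * a ≤ (t + q) * a :=
      mul_le_mul_of_nonneg_right (min_le_right _ _) h0
    nlinarith
  exact lt_of_lt_of_le (lt_min ht hs) key

lemma aux_int (t s : ℝ) (ht : 0 < t) (hs : 0 < s) :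
    (∫ a in (0:ℝ)..1, ((t + (s - t) * a) ^ 2)⁻¹) = (t * s)⁻¹ := by
  set q : ℝ := s - t with hq
  have htq : t + q = s := by ring
  rcases eq_or_ne q 0 with h | h
  · simp only [h, zero_mul, add_zero, intervalIntegral.integral_const, smul_eq_mul, sub_zero,
      one_mul]
    have : s = t := by linarith [sub_eq_zero.mp h]
    rw [this, sq]
  · have hd : ∀ a ∈ Set.uIcc (0:ℝ) 1, 0 < t + q * a := by
      intro a ha
      rw [Set.uIcc_of_le zero_le_one] at ha
      exact aux_pos t q ht (htq ▸ hs) ha.1 ha.2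
    have hderiv : ∀ a ∈ Set.uIcc (0:ℝ) 1,
        HasDerivAt (fun a => -(q⁻¹ * (t + q * a)⁻¹)) ((t + q * a) ^ 2)⁻¹ a := by
      intro a ha
      have h1 : HasDerivAt (fun a : ℝ => t + q * a) q a := by
        simpa using ((hasDerivAt_id' a).const_mul q).const_add t
      have h2 := (h1.inv (hd a ha).ne').const_mul q⁻¹
      have h3 : HasDerivAt (fun y => -(q⁻¹ * (t + q * y)⁻¹)) _ a := h2.neg
      convert h3 using 1
      have hne := (hd a ha).ne'
      field_simp
    have hcont : IntervalIntegrable (fun a => ((t + q * a) ^ 2)⁻¹) volume 0 1 := by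
      apply ContinuousOn.intervalIntegrable
      exact ((continuous_const.add (continuous_const.mul continuous_id)).pow 2).continuousOn.inv₀
        (fun a ha => pow_ne_zero _ (hd a ha).ne')
    rw [intervalIntegral.integral_eq_sub_of_hasDerivAt hderiv hcont]
    have hs' : t + q * 1 = s := by linarith
    have ht0 : t ≠ 0 := ht.ne'
    have hs0 : s ≠ 0 := hs.ne'
    rw [hs']
    field_simp
    rw [mul_zero, add_zero, hq]
    have hts : t * (s / t) = s := by field_simp
    linear_combination hts

lemma inner_eq (α : ℝ) (hα0 : 0 < α) (hα1 : α < 1) {b : ℝ} (hb : b ∈ Set.Ioc (0:ℝ) 1) :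
    (∫ a in Set.Ioc (0:ℝ) 1, (a / (1 - α) + b ^ (-α) * (1 - a)) ^ (-2 : ℤ)) = (1 - α) * b ^ α := by
  have h1α : (0:ℝ) < 1 - α := by linarith
  set t : ℝ := b ^ (-α) with htdef
  have ht : 0 < t := Real.rpow_pos_of_pos hb.1 _
  have hsinv : 0 < (1 - α)⁻¹ := inv_pos.mpr h1α
  rw [← intervalIntegral.integral_of_le zero_le_one]
  have heq : ∀ a : ℝ, (a / (1 - α) + t * (1 - a)) ^ (-2 : ℤ)
      = ((t + ((1 - α)⁻¹ - t) * a) ^ 2)⁻¹ := by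
    intro a
    rw [aux_zpow_neg_two]
    congr 1
    field_simp
    ring
  simp_rw [heq]
  rw [aux_int t (1 - α)⁻¹ ht hsinv]
  have htinv : t⁻¹ = b ^ α := by
    rw [htdef, Real.rpow_neg hb.1.le, inv_inv]
  rw [mul_inv, inv_inv, htinv]
  ring

/-- `D(α) = ∫_0^1 ∫_0^1 (a/(1-α) + b^{-α}(1-a))^{-2} db da = (1-α)/(1+α)`. -/
theorem clustering_double_integral (α : ℝ) (hα0 : 0 < α) (hα1 : α < 1) :
    (∫ a in (0:ℝ)..1, ∫ b in (0:ℝ)..1,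
        (a / (1 - α) + b ^ (-α) * (1 - a)) ^ (-2 : ℤ)) = (1 - α) / (1 + α) := by
  have h1α : (0:ℝ) < 1 - α := by linarith
  set f : ℝ → ℝ → ℝ := fun a b => (a / (1 - α) + b ^ (-α) * (1 - a)) ^ (-2 : ℤ) with hf
  have hmeas : Measurable (uncurry f) := by
    have h : Measurable fun p : ℝ × ℝ => p.1 / (1 - α) + p.2 ^ (-α) * (1 - p.1) :=
      (measurable_fst.div_const _).add
        ((measurable_snd.pow_const _).mul (measurable_const.sub measurable_fst))
    have he : uncurry f = fun p : ℝ × ℝ =>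
        ((p.1 / (1 - α) + p.2 ^ (-α) * (1 - p.1)) ^ 2)⁻¹ := by
      funext p
      simp only [uncurry, hf, aux_zpow_neg_two]
    rw [he]
    exact (h.pow_const 2).inv
  have hbound : ∀ p : ℝ × ℝ, p ∈ (Set.Ioc (0:ℝ) 1) ×ˢ (Set.Ioc (0:ℝ) 1) →
      ‖uncurry f p‖ ≤ 1 := by
    rintro ⟨a, b⟩ ⟨⟨ha0, ha1⟩, ⟨hb0, hb1⟩⟩
    have hbr : 1 ≤ b ^ (-α) :=
      Real.one_le_rpow_of_pos_of_le_one_of_nonpos hb0 hb1 (by linarith)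
    have hinv : 1 ≤ (1 - α)⁻¹ := by
      rw [le_inv_comm₀ one_pos h1α]; linarith
    have hd : 1 ≤ a / (1 - α) + b ^ (-α) * (1 - a) := by
      have h1 : a ≤ a / (1 - α) := by
        rw [div_eq_mul_inv]; nlinarith
      have h2 : 1 - a ≤ b ^ (-α) * (1 - a) := by nlinarith
      linarith
    have hd0 : 0 < a / (1 - α) + b ^ (-α) * (1 - a) := by linarith
    simp only [uncurry, hf, aux_zpow_neg_two]
    rw [Real.norm_eq_abs, abs_inv, abs_of_nonneg (by positivity)]
    rw [inv_le_one_iff₀]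
    right
    nlinarith
  have hInt : Integrable (uncurry f)
      ((volume.restrict (Set.Ioc (0:ℝ) 1)).prod (volume.restrict (Set.Ioc (0:ℝ) 1))) := by
    rw [Measure.prod_restrict]
    apply Measure.integrableOn_of_bounded (M := 1)
    · rw [Measure.prod_prod, Real.volume_Ioc]
      exact ENNReal.mul_ne_top ENNReal.ofReal_ne_top ENNReal.ofReal_ne_top
    · exact hmeas.aestronglyMeasurable
    · rw [ae_restrict_iff' (measurableSet_Ioc.prod measurableSet_Ioc)]
      exact Filter.Eventually.of_forall hbound
  rw [intervalIntegral.integral_of_le zero_le_one]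
  simp_rw [intervalIntegral.integral_of_le zero_le_one]
  rw [MeasureTheory.integral_integral_swap hInt]
  rw [MeasureTheory.setIntegral_congr_fun measurableSet_Ioc
    (g := fun b => (1 - α) * b ^ α) (fun b hb => inner_eq α hα0 hα1 hb)]
  rw [← intervalIntegral.integral_of_le zero_le_one, intervalIntegral.integral_const_mul,
    integral_rpow (Or.inl (by linarith))]
  rw [Real.zero_rpow (by positivity), Real.one_rpow]
  rw [show (1:ℝ) + α = α + 1 by ring]
  have h : α + 1 ≠ 0 := by linarith
  field_simp
  norm_num
end

section
/- Expander mixing lemma for the normalized Laplacian: if G is a graph with normalized Laplacian eigenvalues 0 = λ_0 ≤ λ_1 ≤ ⋯ ≤ λ_{n-1} and spectral gap λ = max{|λ_1 - 1|, |λ_{n-1} - 1|}, then for every vertex subset X, |e(X,X) - vol(X)^2/vol(G)| ≤ λ · vol(X)·vol(X̄)/vol(G). -/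
open Finset Matrix Polynomial

lemma my_charpoly_conj {n : Type*} [Fintype n] [DecidableEq n]
    (U W D : Matrix n n ℝ) (h1 : U * W = 1) (h2 : W * U = 1) :
    (U * D * W).charpoly = D.charpoly := by
  have key : charmatrix (U * D * W) =
      U.map C * charmatrix D * W.map C := by
    rw [charmatrix, charmatrix, mul_sub, sub_mul]
    congr 1
    · rw [scalar_apply, ← Matrix.smul_one_eq_diagonal, Matrix.mul_smul, Matrix.smul_mul,
        mul_one, ← Matrix.map_mul, h1, Matrix.map_one _ (map_zero C) (map_one C)]
    · simp [RingHom.mapMatrix_apply, ← Matrix.map_mul]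
  rw [Matrix.charpoly, Matrix.charpoly, key, det_mul, det_mul, mul_comm, ← mul_assoc,
    ← det_mul, ← Matrix.map_mul, h2, Matrix.map_one _ (map_zero C) (map_one C), det_one, one_mul]

lemma my_charpoly_diagonal {n : Type*} [Fintype n] [DecidableEq n] (ν : n → ℝ) :
    (Matrix.diagonal ν).charpoly = ∏ i, (X - C (ν i)) := by
  have h : charmatrix (diagonal ν) = diagonal (fun i => X - C (ν i)) := by
    ext i j
    by_cases h : i = j
    · subst h; simp
    · simp [h]
  rw [Matrix.charpoly, h, det_diagonal]

lemma my_roots_prod {α : Type*} [Fintype α] (ν : α → ℝ) :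
    (∏ i, (X - C (ν i))).roots = Multiset.map ν Finset.univ.val := by
  have : (∏ i, (X - C (ν i))) = ((Multiset.map ν Finset.univ.val).map fun a => X - C a).prod := by
    rw [Finset.prod_eq_multiset_prod, Multiset.map_map]
    rfl
  rw [this, Polynomial.roots_multiset_prod_X_sub_C]

lemma my_multiset_eq {α β : Type*} [Fintype α] [Fintype β] (ν : α → ℝ) (μ : β → ℝ)
    (h : ∏ i, (X - C (ν i)) = ∏ i, (X - C (μ i))) :
    Multiset.map ν Finset.univ.val = Multiset.map μ Finset.univ.val := by
  rw [← my_roots_prod ν, ← my_roots_prod μ, h]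

lemma my_two_zeros {α β : Type*} [Fintype α] [Fintype β] [DecidableEq α]
    (ν : α → ℝ) (μ : β → ℝ)
    (hm : Multiset.map ν Finset.univ.val = Multiset.map μ Finset.univ.val)
    {i j : α} (hij : i ≠ j) (hi : ν i = 0) (hj : ν j = 0) (k0 : β) :
    ∃ k : β, k ≠ k0 ∧ μ k = 0 := by
  classical
  have hcount : 2 ≤ Multiset.count (0:ℝ) (Multiset.map ν Finset.univ.val) := by
    rw [Multiset.count_map]
    have hsub : ({i, j} : Finset α) ⊆ Finset.univ.filter (fun a => 0 = ν a) := by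
      intro a ha
      simp only [Finset.mem_insert, Finset.mem_singleton] at ha
      rcases ha with rfl | rfl
      · exact Finset.mem_filter.mpr ⟨Finset.mem_univ _, hi.symm⟩
      · exact Finset.mem_filter.mpr ⟨Finset.mem_univ _, hj.symm⟩
    have h2 : 2 ≤ (Finset.univ.filter (fun a => 0 = ν a)).card := by
      have := Finset.card_le_card hsub
      rwa [Finset.card_insert_of_notMem (by simpa using hij), Finset.card_singleton] at this
    exact h2
  rw [hm, Multiset.count_map] at hcount
  have h2 : 1 < (Finset.univ.filter (fun a => 0 = μ a)).card := hcount
  obtain ⟨k, hk, hkk0⟩ := Finset.exists_mem_ne h2 k0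
  exact ⟨k, hkk0, (Finset.mem_filter.mp hk).2.symm⟩

/-- Expander mixing lemma for the normalized Laplacian. `μ` lists the
eigenvalues of `L = I - D^{-1/2} A D^{-1/2}` in nondecreasing order
(`μ 0 = 0`), and `lam = max{|μ 1 - 1|, |μ (n-1) - 1|}` is the spectral gap.
Then for every vertex subset `X`,
`|e(X,X) - vol(X)²/vol(G)| ≤ lam · vol(X) · vol(X̄) / vol(G)`. -/
theorem expander_mixing_lemma
    {V : Type*} [Fintype V] [DecidableEq V]
    (G : SimpleGraph V) [DecidableRel G.Adj]
    (hdeg : ∀ v, 0 < G.degree v)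
    (hn : 2 ≤ Fintype.card V)
    (μ : Fin (Fintype.card V) → ℝ) (hmono : Monotone μ)
    (hchar :
      (1 - (Matrix.diagonal fun v => ((G.degree v : ℝ)) ^ (-(1/2) : ℝ)) *
          (G.adjMatrix ℝ) *
          (Matrix.diagonal fun v => ((G.degree v : ℝ)) ^ (-(1/2) : ℝ))).charpoly
        = ∏ i, (X - C (μ i)))
    (hμ0 : μ ⟨0, by omega⟩ = 0)
    (lam : ℝ)
    (hlam : lam = max |μ ⟨1, by omega⟩ - 1| |μ ⟨Fintype.card V - 1, by omega⟩ - 1|) :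
    ∀ S : Finset V,
      |(∑ u ∈ S, ∑ v ∈ S, (G.adjMatrix ℝ) u v)
          - (∑ v ∈ S, (G.degree v : ℝ)) ^ 2 / (∑ v, (G.degree v : ℝ))|
        ≤ lam * (∑ v ∈ S, (G.degree v : ℝ)) * (∑ v ∈ Sᶜ, (G.degree v : ℝ))
            / (∑ v, (G.degree v : ℝ)) := by
  intro S
  classical
  set d : V → ℝ := fun v => (G.degree v : ℝ) with hd_def
  have hd : ∀ v, (0:ℝ) < d v := fun v => by simp only [hd_def]; exact_mod_cast hdeg v
  set r : V → ℝ := fun v => d v ^ (-(1/2) : ℝ) with hr_def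
  set e : V → ℝ := fun v => d v ^ ((1/2) : ℝ) with he_def
  have hre : ∀ v, r v * e v = 1 := by
    intro v
    rw [hr_def, he_def, ← Real.rpow_add (hd v)]
    norm_num
  have her : ∀ v, e v * r v = 1 := fun v => by rw [mul_comm]; exact hre v
  have hee : ∀ v, e v * e v = d v := by
    intro v
    rw [he_def, ← Real.rpow_add (hd v)]
    norm_num
  have hrd : ∀ v, r v * d v = e v := by
    intro v
    simp only [hr_def, he_def]
    nth_rewrite 2 [← Real.rpow_one (d v)]
    rw [← Real.rpow_add (hd v)]
    norm_num
  set A : Matrix V V ℝ := G.adjMatrix ℝ with hA_def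
  set L : Matrix V V ℝ := 1 - Matrix.diagonal r * A * Matrix.diagonal r with hL_def
  -- L is the matrix in hchar
  have hchar' : L.charpoly = ∏ i, (X - C (μ i)) := hchar
  -- Hermitian
  have hAH : A.IsHermitian := by
    rw [Matrix.IsHermitian, conjTranspose_eq_transpose_of_trivial, hA_def,
      SimpleGraph.transpose_adjMatrix]
  have hL : L.IsHermitian := by
    have h1 : (Matrix.diagonal r * A * Matrix.diagonal r).IsHermitian := by
      have := Matrix.isHermitian_mul_mul_conjTranspose (Matrix.diagonal r) hAH
      rwa [conjTranspose_eq_transpose_of_trivial, Matrix.diagonal_transpose] at this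
    exact Matrix.isHermitian_one.sub h1
  set ν : V → ℝ := hL.eigenvalues with hν_def
  set U : Matrix V V ℝ := (hL.eigenvectorUnitary : Matrix V V ℝ) with hU_def
  have hstar : star U = Uᵀ := by
    rw [Matrix.star_eq_conjTranspose, conjTranspose_eq_transpose_of_trivial]
  have hU2 : U * Uᵀ = 1 := by
    rw [← hstar]; exact (Matrix.mem_unitaryGroup_iff).mp hL.eigenvectorUnitary.2
  have hU1 : Uᵀ * U = 1 := by
    rw [← hstar]; exact (Matrix.mem_unitaryGroup_iff').mp hL.eigenvectorUnitary.2
  have hspec : L = U * Matrix.diagonal ν * Uᵀ := by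
    have h := hL.spectral_theorem
    simp only [Unitary.conjStarAlgAut_apply, Unitary.coe_star] at h
    rwa [hstar, RCLike.ofReal_real_eq_id, Function.id_comp] at h
  have hcharν : L.charpoly = ∏ i, (X - C (ν i)) := by
    rw [hspec, my_charpoly_conj U Uᵀ _ hU2 hU1, my_charpoly_diagonal]
  have hmult : Multiset.map ν Finset.univ.val = Multiset.map μ Finset.univ.val :=
    my_multiset_eq ν μ (by rw [← hcharν, hchar'])
  -- basic volume quantities
  have hnV : Nonempty V := Fintype.card_pos_iff.mp (by omega)
  set volG : ℝ := ∑ v, d v with hvolG_def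
  have hvolG : 0 < volG := by
    rw [hvolG_def]; exact Finset.sum_pos (fun v _ => hd v) Finset.univ_nonempty
  set s : ℝ := volG ^ ((1/2) : ℝ) with hs_def
  have hs : 0 < s := Real.rpow_pos_of_pos hvolG _
  have hss : s * s = volG := by
    rw [hs_def, ← Real.rpow_add hvolG]; norm_num
  set φ : V → ℝ := fun v => e v / s with hφ_def
  set x : V → ℝ := fun v => if v ∈ S then e v else 0 with hx_def
  set volS : ℝ := ∑ v ∈ S, d v with hvolS_def
  -- L kills φ
  have hMφ : (Matrix.diagonal r * A * Matrix.diagonal r) *ᵥ φ = φ := by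
    have hinner : Matrix.diagonal r *ᵥ φ = Function.const V s⁻¹ := by
      funext v
      rw [Matrix.mulVec_diagonal]
      show r v * (e v / s) = s⁻¹
      rw [div_eq_mul_inv, ← mul_assoc, hre v, one_mul]
    rw [← Matrix.mulVec_mulVec, ← Matrix.mulVec_mulVec, hinner]
    funext u
    rw [Matrix.mulVec_diagonal, hA_def, SimpleGraph.adjMatrix_mulVec_const_apply]
    show r u * (d u * s⁻¹) = e u / s
    rw [← mul_assoc, hrd u, div_eq_mul_inv]
  have hLφ : L *ᵥ φ = 0 := by
    rw [hL_def, Matrix.sub_mulVec, Matrix.one_mulVec, hMφ, sub_self]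
  -- norms and inner products
  have hφφ : φ ⬝ᵥ φ = 1 := by
    show ∑ v, φ v * φ v = 1
    have h1 : ∀ v ∈ Finset.univ, φ v * φ v = d v / volG := by
      intro v _
      show (e v / s) * (e v / s) = d v / volG
      rw [div_mul_div_comm, hee v, hss]
    rw [Finset.sum_congr rfl h1, ← Finset.sum_div, ← hvolG_def]
    exact div_self (ne_of_gt hvolG)
  have hφx : φ ⬝ᵥ x = volS / s := by
    show ∑ v, φ v * x v = volS / s
    have h1 : ∀ v ∈ Finset.univ, φ v * x v = if v ∈ S then d v / s else 0 := by
      intro v _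
      show (e v / s) * (if v ∈ S then e v else 0) = _
      by_cases hv : v ∈ S
      · simp only [hv, if_true]
        rw [div_mul_eq_mul_div, hee v]
      · simp [hv]
    rw [Finset.sum_congr rfl h1, Finset.sum_ite_mem, Finset.univ_inter, ← Finset.sum_div,
      ← hvolS_def]
  have hxx : x ⬝ᵥ x = volS := by
    show ∑ v, x v * x v = volS
    have h1 : ∀ v ∈ Finset.univ, x v * x v = if v ∈ S then d v else 0 := by
      intro v _
      show (if v ∈ S then e v else 0) * (if v ∈ S then e v else 0) = _
      by_cases hv : v ∈ S
      · simp only [hv, if_true]; exact hee v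
      · simp [hv]
    rw [Finset.sum_congr rfl h1, Finset.sum_ite_mem, Finset.univ_inter, ← hvolS_def]
  -- the quadratic form of the adjacency part on x
  set ind : V → ℝ := fun v => if v ∈ S then 1 else 0 with hind_def
  have hQ : x ⬝ᵥ ((Matrix.diagonal r * A * Matrix.diagonal r) *ᵥ x) =
      ∑ u ∈ S, ∑ v ∈ S, A u v := by
    have h1 : Matrix.diagonal r *ᵥ x = ind := by
      funext v
      rw [Matrix.mulVec_diagonal]
      show r v * (if v ∈ S then e v else 0) = if v ∈ S then 1 else 0
      by_cases hv : v ∈ S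
      · simp only [hv, if_true]; exact hre v
      · simp [hv]
    have h2 : ∀ w : V → ℝ, x ⬝ᵥ (Matrix.diagonal r *ᵥ w) = ind ⬝ᵥ w := by
      intro w
      show ∑ v, x v * (Matrix.diagonal r *ᵥ w) v = ∑ v, ind v * w v
      refine Finset.sum_congr rfl fun v _ => ?_
      rw [Matrix.mulVec_diagonal]
      show (if v ∈ S then e v else 0) * (r v * w v) = (if v ∈ S then 1 else 0) * w v
      by_cases hv : v ∈ S
      · simp only [hv, if_true]
        rw [← mul_assoc, her v]
      · simp [hv]
    rw [← Matrix.mulVec_mulVec, ← Matrix.mulVec_mulVec, h2, h1]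
    show ∑ u, ind u * (A *ᵥ ind) u = ∑ u ∈ S, ∑ v ∈ S, A u v
    have h3 : ∀ u ∈ Finset.univ, ind u * (A *ᵥ ind) u
        = if u ∈ S then (∑ v, if v ∈ S then A u v else 0) else 0 := by
      intro u _
      show (if u ∈ S then (1:ℝ) else 0) * (∑ v, A u v * ind v) = _
      by_cases hu : u ∈ S
      · simp only [hu, if_true, one_mul]
        refine Finset.sum_congr rfl fun v _ => ?_
        show A u v * (if v ∈ S then 1 else 0) = _
        by_cases hv : v ∈ S <;> simp [hv]
      · simp [hu]
    rw [Finset.sum_congr rfl h3, Finset.sum_ite_mem, Finset.univ_inter]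
    exact Finset.sum_congr rfl fun u _ => by
      rw [Finset.sum_ite_mem, Finset.univ_inter]
  -- the orthogonal part y
  set y : V → ℝ := x - (volS / s) • φ with hy_def
  have hφy : φ ⬝ᵥ y = 0 := by
    rw [hy_def, dotProduct_sub, dotProduct_smul, hφx, hφφ, smul_eq_mul, mul_one, sub_self]
  have hyy : y ⬝ᵥ y = volS - volS^2 / volG := by
    have hxy : x ⬝ᵥ y = volS - volS^2 / volG := by
      rw [hy_def, dotProduct_sub, dotProduct_smul, hxx, smul_eq_mul, dotProduct_comm, hφx]
      rw [div_mul_div_comm, hss]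
      ring
    nth_rewrite 2 [hy_def]
    rw [dotProduct_sub, dotProduct_smul, smul_eq_mul, dotProduct_comm y x, hxy,
      dotProduct_comm y φ, hφy, mul_zero, sub_zero]
  have hLsymm : Lᵀ = L := by
    rw [← conjTranspose_eq_transpose_of_trivial]; exact hL
  have hLy : L *ᵥ y = L *ᵥ x := by
    rw [hy_def, Matrix.mulVec_sub, Matrix.mulVec_smul, hLφ, smul_zero, sub_zero]
  have hφLx : φ ⬝ᵥ (L *ᵥ x) = 0 := by
    rw [Matrix.dotProduct_mulVec, ← Matrix.mulVec_transpose, hLsymm, hLφ, zero_dotProduct]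
  have hyLy : y ⬝ᵥ (L *ᵥ y) = x ⬝ᵥ (L *ᵥ x) := by
    rw [hLy, hy_def, sub_dotProduct, smul_dotProduct, hφLx, smul_eq_mul, mul_zero, sub_zero]
  -- eigen-coordinates
  set c : V → ℝ := Uᵀ *ᵥ y with hc_def
  set b : V → ℝ := Uᵀ *ᵥ φ with hb_def
  have hdot : ∀ p q : V → ℝ, (Uᵀ *ᵥ p) ⬝ᵥ (Uᵀ *ᵥ q) = p ⬝ᵥ q := by
    intro p q
    rw [Matrix.mulVec_transpose, Matrix.dotProduct_mulVec, Matrix.vecMul_vecMul, hU2,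
      Matrix.vecMul_one]
  have hbb : b ⬝ᵥ b = 1 := by rw [hb_def, hdot, hφφ]
  have hbc : b ⬝ᵥ c = 0 := by rw [hb_def, hc_def, hdot, hφy]
  have hcc : c ⬝ᵥ c = y ⬝ᵥ y := by rw [hc_def, hdot]
  have hLyν : y ⬝ᵥ (L *ᵥ y) = ∑ i, ν i * (c i * c i) := by
    conv_lhs => rw [hspec, ← Matrix.mulVec_mulVec, ← Matrix.mulVec_mulVec,
      Matrix.dotProduct_mulVec, ← Matrix.mulVec_transpose]
    show c ⬝ᵥ (Matrix.diagonal ν *ᵥ c) = _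
    show ∑ i, c i * (Matrix.diagonal ν *ᵥ c) i = _
    refine Finset.sum_congr rfl fun i _ => ?_
    rw [Matrix.mulVec_diagonal]
    ring
  have hνb : ∀ i, ν i * b i = 0 := by
    have h0 : Matrix.diagonal ν *ᵥ b = 0 := by
      calc Matrix.diagonal ν *ᵥ b = (Matrix.diagonal ν * Uᵀ) *ᵥ φ := by
            rw [hb_def, Matrix.mulVec_mulVec]
        _ = ((Uᵀ * U) * (Matrix.diagonal ν * Uᵀ)) *ᵥ φ := by rw [hU1, one_mul]
        _ = (Uᵀ * (U * Matrix.diagonal ν * Uᵀ)) *ᵥ φ := by simp only [mul_assoc]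
        _ = Uᵀ *ᵥ (L *ᵥ φ) := by rw [← hspec, ← Matrix.mulVec_mulVec]
        _ = 0 := by rw [hLφ, Matrix.mulVec_zero]
    intro i
    have h1 := congrFun h0 i
    rwa [Matrix.mulVec_diagonal] at h1
  -- key eigenvalue bound
  have hμmem : ∀ i : V, ∃ j : Fin (Fintype.card V), μ j = ν i := by
    intro i
    have h1 : ν i ∈ Multiset.map μ Finset.univ.val := by
      rw [← hmult]
      exact Multiset.mem_map_of_mem ν (Finset.mem_val.mpr (Finset.mem_univ i))
    obtain ⟨j, _, hj⟩ := Multiset.mem_map.mp h1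
    exact ⟨j, hj⟩
  have hlam0 : 0 ≤ lam := hlam ▸ le_trans (abs_nonneg _) (le_max_left _ _)
  have hkey : ∀ i : V, c i = 0 ∨ |1 - ν i| ≤ lam := by
    intro i
    by_cases hνi : ν i = 0
    · by_cases hex : ∃ j : V, j ≠ i ∧ ν j = 0
      · right
        obtain ⟨j, hji, hj0⟩ := hex
        obtain ⟨k, hk0, hkμ⟩ := my_two_zeros ν μ hmult hji hj0 hνi
          (⟨0, by omega⟩ : Fin (Fintype.card V))
        have h1k : (⟨1, by omega⟩ : Fin (Fintype.card V)) ≤ k := by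
          have hkv : k.val ≠ 0 := fun h => hk0 (Fin.ext h)
          rw [Fin.le_def]
          show 1 ≤ k.val
          omega
        have hμ1le : μ ⟨1, by omega⟩ ≤ 0 := hkμ ▸ hmono h1k
        have hμ1ge : 0 ≤ μ ⟨1, by omega⟩ := by
          have h01 : (⟨0, by omega⟩ : Fin (Fintype.card V)) ≤ ⟨1, by omega⟩ := by
            rw [Fin.le_def]; exact Nat.zero_le _
          exact hμ0 ▸ hmono h01
        have hμ1 : μ ⟨1, by omega⟩ = (0:ℝ) := le_antisymm hμ1le hμ1ge
        rw [hνi, sub_zero, abs_one, hlam]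
        refine le_trans ?_ (le_max_left _ _)
        rw [hμ1]
        norm_num
      · left
        push_neg at hex
        have hbj : ∀ j, j ≠ i → b j = 0 := by
          intro j hj
          rcases mul_eq_zero.mp (hνb j) with h | h
          · exact absurd h (hex j hj)
          · exact h
        have hbi : b i ≠ 0 := by
          intro h
          have hz : b ⬝ᵥ b = 0 := by
            show ∑ j, b j * b j = 0
            refine Finset.sum_eq_zero fun j _ => ?_
            by_cases hji : j = i
            · rw [hji, h, mul_zero]
            · rw [hbj j hji, zero_mul]
          rw [hbb] at hz
          norm_num at hz
        have hsingle : b ⬝ᵥ c = b i * c i := by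
          show ∑ j, b j * c j = b i * c i
          refine Finset.sum_eq_single i (fun j _ hji => by rw [hbj j hji, zero_mul])
            (fun h => absurd (Finset.mem_univ i) h)
        rw [hbc] at hsingle
        rcases mul_eq_zero.mp hsingle.symm with h | h
        · exact absurd h hbi
        · exact h
    · right
      obtain ⟨j, hj⟩ := hμmem i
      have hj0 : j ≠ (⟨0, by omega⟩ : Fin (Fintype.card V)) := by
        rintro rfl
        exact hνi (hj ▸ hμ0)
      have h1j : (⟨1, by omega⟩ : Fin (Fintype.card V)) ≤ j := by
        have hjv : j.val ≠ 0 := fun h => hj0 (Fin.ext h)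
        rw [Fin.le_def]
        show 1 ≤ j.val
        omega
      have hjn : j ≤ (⟨Fintype.card V - 1, by omega⟩ : Fin (Fintype.card V)) := by
        have hlt := j.isLt
        rw [Fin.le_def]
        show j.val ≤ Fintype.card V - 1
        omega
      have hlow : μ ⟨1, by omega⟩ ≤ ν i := hj ▸ hmono h1j
      have hhigh : ν i ≤ μ ⟨Fintype.card V - 1, by omega⟩ := hj ▸ hmono hjn
      rw [abs_sub_comm, hlam, abs_le]
      constructor
      · refine le_trans (neg_le_neg (le_max_left |μ ⟨1, by omega⟩ - 1| _)) ?_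
        refine le_trans (neg_abs_le _) ?_
        linarith
      · refine le_trans ?_ (le_max_right |μ ⟨1, by omega⟩ - 1| _)
        refine le_trans ?_ (le_abs_self _)
        linarith
  -- the spectral bound
  have hsum : y ⬝ᵥ y - y ⬝ᵥ (L *ᵥ y) = ∑ i, (1 - ν i) * (c i * c i) := by
    rw [hLyν, ← hcc]
    show (∑ i, c i * c i) - ∑ i, ν i * (c i * c i) = _
    rw [← Finset.sum_sub_distrib]
    exact Finset.sum_congr rfl fun i _ => by ring
  have hbound : |y ⬝ᵥ y - y ⬝ᵥ (L *ᵥ y)| ≤ lam * (y ⬝ᵥ y) := by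
    rw [hsum, ← hcc]
    calc |∑ i, (1 - ν i) * (c i * c i)| ≤ ∑ i, |(1 - ν i) * (c i * c i)| :=
          Finset.abs_sum_le_sum_abs _ _
      _ ≤ ∑ i, lam * (c i * c i) := by
          refine Finset.sum_le_sum fun i _ => ?_
          rcases hkey i with h | h
          · simp [h, hlam0]
          · rw [abs_mul, abs_of_nonneg (mul_self_nonneg (c i))]
            exact mul_le_mul_of_nonneg_right h (mul_self_nonneg _)
      _ = lam * ∑ i, c i * c i := by rw [Finset.mul_sum]
      _ = lam * (c ⬝ᵥ c) := rfl
  -- final assembly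
  set volSc : ℝ := ∑ v ∈ Sᶜ, d v with hvolSc_def
  have hcompl : volS + volSc = volG := by
    rw [hvolS_def, hvolSc_def, hvolG_def]
    exact Finset.sum_add_sum_compl S d
  have hES : (∑ u ∈ S, ∑ v ∈ S, A u v) = volS - x ⬝ᵥ (L *ᵥ x) := by
    have h1 : x ⬝ᵥ (L *ᵥ x) = volS - (∑ u ∈ S, ∑ v ∈ S, A u v) := by
      rw [hL_def, Matrix.sub_mulVec, Matrix.one_mulVec, dotProduct_sub, hxx, hQ]
    linarith
  have hkey2 : (∑ u ∈ S, ∑ v ∈ S, A u v) - volS^2 / volG = y ⬝ᵥ y - y ⬝ᵥ (L *ᵥ y) := by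
    rw [hES, hyLy, hyy]
    ring
  have hfin : volS - volS^2 / volG = volS * volSc / volG := by
    have hsc : volSc = volG - volS := by linarith
    rw [hsc]
    field_simp
  calc |(∑ u ∈ S, ∑ v ∈ S, A u v) - volS^2 / volG| = |y ⬝ᵥ y - y ⬝ᵥ (L *ᵥ y)| := by
        rw [hkey2]
    _ ≤ lam * (y ⬝ᵥ y) := hbound
    _ = lam * (volS * volSc / volG) := by rw [hyy, hfin]
    _ = lam * volS * volSc / volG := by ring
end

section
/- Geometric series tail estimate: for α ∈ (0,1), β ∈ (0,1-α), m with m = o(log n), and I = (1/2)·log₂ n - 2·log₂ log n, the sum ∑_{i=1}^{I} (2^i·√n·log² n)^{1 - (m+1)α/m} · n^{1 - (m+1)β/m} is o(n^{2-α-β}) as n → ∞. -/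
open Filter Asymptotics Real Topology


lemma log_ge_one (n : ℕ) (hn : 3 ≤ n) : 1 ≤ Real.log n := by
  have hn0 : (0:ℝ) < n := by exact_mod_cast Nat.lt_of_lt_of_le (by norm_num) hn
  rw [Real.le_log_iff_exp_le hn0]
  have h3 : (3:ℝ) ≤ n := by exact_mod_cast hn
  have := Real.exp_one_lt_d9
  linarith

lemma two_rpow_helper (n : ℕ) (hn : 3 ≤ n) :
    (2:ℝ) ^ ((1/2) * Real.logb 2 n - 2 * Real.logb 2 (Real.log n)) *
      (Real.sqrt n * (Real.log n) ^ 2) = n := by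
  have hn0 : (0:ℝ) < n := by exact_mod_cast Nat.lt_of_lt_of_le (by norm_num) hn
  have hL0 : (0:ℝ) < Real.log n := lt_of_lt_of_le one_pos (log_ge_one n hn)
  have h1 : (2:ℝ) ^ ((1/2) * Real.logb 2 n) = Real.sqrt n := by
    rw [mul_comm, Real.rpow_mul (by norm_num : (0:ℝ) ≤ 2),
      Real.rpow_logb two_pos (by norm_num) hn0, Real.sqrt_eq_rpow]
  have h2 : (2:ℝ) ^ (2 * Real.logb 2 (Real.log n)) = (Real.log n) ^ 2 := by
    rw [mul_comm, Real.rpow_mul (by norm_num : (0:ℝ) ≤ 2),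
      Real.rpow_logb two_pos (by norm_num) hL0]
    rw [← Real.rpow_natCast (Real.log n) 2]
    norm_num
  rw [Real.rpow_sub two_pos, h1, h2]
  rw [div_mul_eq_mul_div]
  rw [← mul_assoc, Real.mul_self_sqrt hn0.le, mul_div_assoc, div_self (by positivity : (Real.log n)^2 ≠ 0), mul_one]

set_option maxHeartbeats 1000000 in
lemma aux_bound (α β : ℝ) (hα0 : 0 < α) (hα1 : α < 1) (hβ0 : 0 < β) (hβ1 : β < 1 - α)
    (mn n : ℕ) (hmn : 0 < mn) (hn : 3 ≤ n) :
    ∑ i ∈ Finset.Icc 1 ⌊(1 / 2) * Real.logb 2 n - 2 * Real.logb 2 (Real.log n)⌋₊,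
        ((2 : ℝ) ^ (i : ℕ) * Real.sqrt n * (Real.log n) ^ 2) ^ (1 - ((mn : ℝ) + 1) * α / mn)
          * (n : ℝ) ^ (1 - ((mn : ℝ) + 1) * β / mn)
    ≤ (2 * Real.log n * Real.exp (-(min ((α+β)/(⌈2*α/(1-α)⌉₊:ℝ)) ((1-α)/2)) * Real.log n)
        + (2 / (2 ^ ((1-α)/2 : ℝ) - 1)) * Real.exp (-((α+β) * (Real.log n / mn))))
        * (n : ℝ) ^ (2 - α - β) := by
  have hn0 : (0:ℝ) < n := by exact_mod_cast Nat.lt_of_lt_of_le (by norm_num) hn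
  have hn1 : (1:ℝ) ≤ n := by exact_mod_cast Nat.le_of_lt (Nat.lt_of_lt_of_le (by norm_num) hn)
  have hL1 : 1 ≤ Real.log n := log_ge_one n hn
  have hL0 : (0:ℝ) < Real.log n := lt_of_lt_of_le one_pos hL1
  set L := Real.log n with hLdef
  set M : ℕ := ⌈2*α/(1-α)⌉₊ with hMdef
  have hM1 : 1 ≤ M := Nat.one_le_ceil_iff.mpr (div_pos (by linarith) (by linarith))
  have hM0 : (0:ℝ) < M := by exact_mod_cast hM1
  set c : ℝ := min ((α+β)/(M:ℝ)) ((1-α)/2) with hcdef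
  have hc0 : 0 < c := lt_min (by positivity) (by linarith)
  have hc1 : c ≤ (α+β)/(M:ℝ) := min_le_left _ _
  have hc2 : c ≤ (1-α)/2 := min_le_right _ _
  have hx2gt : (1:ℝ) < 2 ^ ((1-α)/2 : ℝ) := by
    rw [show (1:ℝ) = 2 ^ (0:ℝ) by simp]
    exact Real.rpow_lt_rpow_of_exponent_lt one_lt_two (by linarith)
  have hc₀0 : (0:ℝ) < 2 ^ ((1-α)/2 : ℝ) - 1 := by linarith
  set c₀ : ℝ := 2 ^ ((1-α)/2 : ℝ) - 1 with hc₀def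
  have hmn1 : (1:ℝ) ≤ (mn:ℝ) := by exact_mod_cast hmn
  set t : ℝ := 1/(mn:ℝ) with htdef
  have ht0 : 0 < t := by positivity
  have ht1 : t ≤ 1 := by rw [htdef]; rw [div_le_one (by linarith)]; linarith
  have he : 1 - ((mn : ℝ) + 1) * α / mn = 1 - α - α*t := by
    rw [htdef]; field_simp; ring
  have hf : 1 - ((mn : ℝ) + 1) * β / mn = 1 - β - β*t := by
    rw [htdef]; field_simp; ring
  set e : ℝ := 1 - α - α*t with hedef
  set f : ℝ := 1 - β - β*t with hfdef
  rw [he, hf]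
  set I : ℕ := ⌊(1 / 2) * Real.logb 2 n - 2 * Real.logb 2 L⌋₊ with hIdef
  clear_value M c c₀ t e f
  -- nonnegativity of the RHS
  have hrhs0 : 0 ≤ (2 * L * Real.exp (-c * L) + (2 / c₀) * Real.exp (-((α+β) * (L / mn))))
      * (n : ℝ) ^ (2 - α - β) := by positivity
  by_cases hI : I = 0
  · rw [hI, show Finset.Icc 1 0 = (∅ : Finset ℕ) from Finset.Icc_eq_empty (by norm_num),
      Finset.sum_empty]
    exact hrhs0
  -- now I ≥ 1
  have hx1 : 1 ≤ (1 / 2) * Real.logb 2 n - 2 * Real.logb 2 L :=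
    Nat.floor_pos.mp (Nat.pos_of_ne_zero hI)
  have hIle : (I:ℝ) ≤ (1 / 2) * Real.logb 2 n - 2 * Real.logb 2 L :=
    Nat.floor_le (by linarith)
  have hIL : (I:ℝ) ≤ L := by
    have hb0 : (0:ℝ) ≤ Real.logb 2 L := Real.logb_nonneg one_lt_two hL1
    have hlog2 : (1/2:ℝ) ≤ Real.log 2 := by
      have := Real.log_two_gt_d9; linarith
    have h1 : (I:ℝ) ≤ (1/2) * Real.logb 2 n := by linarith
    have h2 : Real.logb 2 n = L / Real.log 2 := rfl
    have h3 : L / Real.log 2 ≤ L / (1/2) := by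
      apply div_le_div_of_nonneg_left (by linarith) (by norm_num) hlog2
    have h4 : L / (1/2) = 2 * L := by ring
    linarith
  have hbase_pos : ∀ i : ℕ, (0:ℝ) < (2:ℝ)^(i:ℕ) * Real.sqrt n * L^2 := by
    intro i
    have : (0:ℝ) < Real.sqrt n := Real.sqrt_pos.mpr hn0
    positivity
  have hbase_le : ∀ i ∈ Finset.Icc 1 I, (2:ℝ)^(i:ℕ) * Real.sqrt n * L^2 ≤ (n:ℝ) := by
    intro i hi
    have hi2 : i ≤ I := (Finset.mem_Icc.mp hi).2
    have hi2' : (i:ℝ) ≤ (I:ℝ) := by exact_mod_cast hi2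
    have h2i : (2:ℝ)^(i:ℕ) ≤ (2:ℝ) ^ ((1 / 2) * Real.logb 2 n - 2 * Real.logb 2 L) := by
      rw [← Real.rpow_natCast 2 i]
      exact Real.rpow_le_rpow_of_exponent_le one_le_two (le_trans hi2' hIle)
    calc (2:ℝ)^(i:ℕ) * Real.sqrt n * L^2
        ≤ (2:ℝ) ^ ((1 / 2) * Real.logb 2 n - 2 * Real.logb 2 L) * (Real.sqrt n * L^2) := by
          rw [mul_assoc]
          exact mul_le_mul_of_nonneg_right h2i (by positivity)
      _ = (n:ℝ) := two_rpow_helper n hn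
  have hbase_ge : ∀ i : ℕ, Real.sqrt n ≤ (2:ℝ)^(i:ℕ) * Real.sqrt n * L^2 := by
    intro i
    have h1 : (1:ℝ) ≤ (2:ℝ)^(i:ℕ) := one_le_pow₀ one_le_two
    have h2 : (1:ℝ) ≤ L^2 := by nlinarith
    have h3 : (0:ℝ) ≤ Real.sqrt n := Real.sqrt_nonneg _
    calc Real.sqrt n ≤ (2:ℝ)^(i:ℕ) * Real.sqrt n := le_mul_of_one_le_left h3 h1
      _ ≤ (2:ℝ)^(i:ℕ) * Real.sqrt n * L^2 := le_mul_of_one_le_right (by positivity) h2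
  have hef : e + f = 2 - α - β - (α+β)*t := by rw [hedef, hfdef]; ring
  -- the common bound for case A
  have hcaseA : mn ≤ M →
      (∀ i ∈ Finset.Icc 1 I, ((2:ℝ)^(i:ℕ) * Real.sqrt n * L^2) ^ e * (n:ℝ) ^ f
        ≤ (n:ℝ) ^ (2 - α - β - c)) := by
    intro hmM i hi
    have htM : 1/(M:ℝ) ≤ t := by
      rw [htdef]
      apply one_div_le_one_div_of_le (by linarith) (by exact_mod_cast hmM)
    have hct : c ≤ (α+β)*t := by
      have : (α+β)/(M:ℝ) ≤ (α+β)*t := by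
        rw [div_eq_mul_one_div]
        exact mul_le_mul_of_nonneg_left htM (by linarith)
      linarith
    rcases le_or_gt 0 e with he0 | he0
    · -- B^e ≤ n^e
      have h1 : ((2:ℝ)^(i:ℕ) * Real.sqrt n * L^2) ^ e ≤ (n:ℝ) ^ e :=
        Real.rpow_le_rpow (hbase_pos i).le (hbase_le i hi) he0
      calc ((2:ℝ)^(i:ℕ) * Real.sqrt n * L^2) ^ e * (n:ℝ) ^ f
          ≤ (n:ℝ) ^ e * (n:ℝ) ^ f :=
            mul_le_mul_of_nonneg_right h1 (Real.rpow_nonneg hn0.le f)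
        _ = (n:ℝ) ^ (e + f) := (Real.rpow_add hn0 e f).symm
        _ ≤ (n:ℝ) ^ (2 - α - β - c) := by
            apply Real.rpow_le_rpow_of_exponent_le hn1
            rw [hef]; linarith
    · -- B^e ≤ (√n)^e = n^(e/2)
      have h1 : ((2:ℝ)^(i:ℕ) * Real.sqrt n * L^2) ^ e ≤ (Real.sqrt n) ^ e :=
        Real.rpow_le_rpow_of_nonpos (Real.sqrt_pos.mpr hn0) (hbase_ge i) he0.le
      have h2 : (Real.sqrt n) ^ e = (n:ℝ) ^ ((1/2) * e) := by
        rw [Real.sqrt_eq_rpow, ← Real.rpow_mul hn0.le]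
      calc ((2:ℝ)^(i:ℕ) * Real.sqrt n * L^2) ^ e * (n:ℝ) ^ f
          ≤ (n:ℝ) ^ ((1/2) * e) * (n:ℝ) ^ f := by
            rw [← h2]
            exact mul_le_mul_of_nonneg_right h1 (Real.rpow_nonneg hn0.le f)
        _ = (n:ℝ) ^ ((1/2) * e + f) := (Real.rpow_add hn0 _ _).symm
        _ ≤ (n:ℝ) ^ (2 - α - β - c) := by
            apply Real.rpow_le_rpow_of_exponent_le hn1
            rw [hedef, hfdef]
            have h3 : 0 ≤ (α/2 + β) * t := by positivity
            linarith
  rcases le_or_gt mn M with hmM | hmM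
  · -- Case A
    calc ∑ i ∈ Finset.Icc 1 I, ((2:ℝ)^(i:ℕ) * Real.sqrt n * L^2) ^ e * (n:ℝ) ^ f
        ≤ ∑ i ∈ Finset.Icc 1 I, (n:ℝ) ^ (2 - α - β - c) :=
          Finset.sum_le_sum (hcaseA hmM)
      _ = (I:ℝ) * (n:ℝ) ^ (2 - α - β - c) := by
          rw [Finset.sum_const, Nat.card_Icc]
          simp [nsmul_eq_mul]
      _ ≤ 2 * L * Real.exp (-c * L) * (n:ℝ) ^ (2 - α - β) := by
          have h1 : (n:ℝ) ^ (2 - α - β - c) = Real.exp (-c * L) * (n:ℝ) ^ (2 - α - β) := by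
            rw [show 2 - α - β - c = -c + (2 - α - β) by ring, Real.rpow_add hn0]
            congr 1
            rw [Real.rpow_def_of_pos hn0, mul_comm]
          rw [h1, ← mul_assoc]
          apply mul_le_mul_of_nonneg_right _ (Real.rpow_nonneg hn0.le _)
          apply mul_le_mul_of_nonneg_right _ (Real.exp_nonneg _)
          linarith
      _ ≤ _ := by
          apply mul_le_mul_of_nonneg_right _ (Real.rpow_nonneg hn0.le _)
          have : 0 ≤ (2 / c₀) * Real.exp (-((α+β) * (L / mn))) := by positivity
          linarith
  · -- Case B: geometric sum
    have hMc : 2*α/(1-α) ≤ (mn:ℝ) := by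
      have h1 : 2*α/(1-α) ≤ (M:ℝ) := hMdef ▸ Nat.le_ceil _
      have h2 : (M:ℝ) ≤ (mn:ℝ) := by exact_mod_cast hmM.le
      linarith
    have htub : α*t ≤ (1-α)/2 := by
      have h0 : 0 < 2*α/(1-α) := div_pos (by linarith) (by linarith)
      have h1 : t ≤ (1-α)/(2*α) := by
        rw [htdef, show (1-α)/(2*α) = 1/(2*α/(1-α)) by field_simp]
        exact one_div_le_one_div_of_le h0 hMc
      have h2 := mul_le_mul_of_nonneg_left h1 hα0.le
      have h3 : α * ((1-α)/(2*α)) = (1-α)/2 := by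
        field_simp
      linarith
    have he0 : (1-α)/2 ≤ e := by rw [hedef]; linarith
    have hepos : 0 < e := lt_of_lt_of_le (by linarith) he0
    have he1 : e ≤ 1 := by
      have := mul_pos hα0 ht0
      rw [hedef]; linarith
    set x : ℝ := (2:ℝ) ^ (e:ℝ) with hxdef
    have hx_ge : 1 + c₀ ≤ x := by
      have h1 : (2:ℝ) ^ ((1-α)/2 : ℝ) ≤ (2:ℝ) ^ (e:ℝ) :=
        Real.rpow_le_rpow_of_exponent_le one_le_two he0
      rw [hxdef, hc₀def]; linarith
    have hx1 : 1 < x := by linarith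
    have hx2 : x ≤ 2 := by
      rw [hxdef]
      calc (2:ℝ) ^ (e:ℝ) ≤ (2:ℝ) ^ (1:ℝ) := Real.rpow_le_rpow_of_exponent_le one_le_two he1
        _ = 2 := Real.rpow_one 2
    have hx0 : 0 < x := lt_trans one_pos hx1
    set A : ℝ := (2:ℝ) ^ ((1 / 2) * Real.logb 2 n - 2 * Real.logb 2 L) with hAdef
    have hA0 : 0 < A := by rw [hAdef]; positivity
    set K : ℝ := (Real.sqrt n * L^2) ^ e * (n:ℝ) ^ f with hKdef
    have hK0 : 0 ≤ K := by
      rw [hKdef]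
      have := Real.sqrt_nonneg (n:ℝ)
      positivity
    have hterm : ∀ i ∈ Finset.Icc 1 I,
        ((2:ℝ)^(i:ℕ) * Real.sqrt n * L^2) ^ e * (n:ℝ) ^ f = x ^ (i:ℕ) * K := by
      intro i _
      rw [hKdef, mul_assoc ((2:ℝ)^(i:ℕ)), Real.mul_rpow (by positivity) (by positivity)]
      have h2ie : ((2:ℝ)^(i:ℕ)) ^ (e:ℝ) = x ^ (i:ℕ) := by
        rw [← Real.rpow_natCast 2 i, ← Real.rpow_mul (by norm_num : (0:ℝ) ≤ 2), mul_comm,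
          Real.rpow_mul (by norm_num : (0:ℝ) ≤ 2), Real.rpow_natCast, hxdef]
      rw [h2ie]; ring
    rw [Finset.sum_congr rfl hterm, ← Finset.sum_mul]
    have hxIA : x ^ I ≤ A ^ (e:ℝ) := by
      have h1 : x ^ I = ((2:ℝ) ^ ((I:ℕ):ℝ)) ^ (e:ℝ) := by
        rw [← Real.rpow_natCast x I, hxdef, ← Real.rpow_mul (by norm_num : (0:ℝ) ≤ 2), mul_comm,
          Real.rpow_mul (by norm_num : (0:ℝ) ≤ 2)]
      have h2 : (2:ℝ) ^ ((I:ℕ):ℝ) ≤ A := by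
        rw [hAdef]
        exact Real.rpow_le_rpow_of_exponent_le one_le_two hIle
      rw [h1]
      exact Real.rpow_le_rpow (by positivity) h2 hepos.le
    have hgeom : ∑ i ∈ Finset.Icc 1 I, x ^ i ≤ 2 * A ^ (e:ℝ) / c₀ := by
      calc ∑ i ∈ Finset.Icc 1 I, x ^ i
          ≤ ∑ i ∈ Finset.range (I+1), x ^ i := by
            apply Finset.sum_le_sum_of_subset_of_nonneg
            · intro a ha
              simp only [Finset.mem_Icc, Finset.mem_range] at *
              omega
            · intro i _ _
              exact pow_nonneg hx0.le i
        _ = (x ^ (I+1) - 1) / (x - 1) := geom_sum_eq hx1.ne' (I+1)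
        _ ≤ (2 * x ^ I) / (x - 1) := by
            apply (div_le_div_iff_of_pos_right (by linarith)).mpr
            rw [pow_succ]
            nlinarith [pow_nonneg hx0.le I]
        _ ≤ (2 * x ^ I) / c₀ := by
            apply div_le_div_of_nonneg_left (by positivity) hc₀0 (by linarith)
        _ ≤ 2 * A ^ (e:ℝ) / c₀ := by
            apply (div_le_div_iff_of_pos_right hc₀0).mpr
            linarith
    have hAK : A ^ (e:ℝ) * K = (n:ℝ) ^ (e + f) := by
      rw [hKdef, ← mul_assoc, ← Real.mul_rpow hA0.le (by positivity)]
      rw [hAdef, hLdef, two_rpow_helper n hn, ← Real.rpow_add hn0]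
    have hnef : (n:ℝ) ^ (e + f) = Real.exp (-((α+β) * (L / mn))) * (n:ℝ) ^ (2 - α - β) := by
      rw [hef, show 2 - α - β - (α+β)*t = (-((α+β)*t)) + (2 - α - β) by ring,
        Real.rpow_add hn0]
      congr 1
      rw [Real.rpow_def_of_pos hn0, ← hLdef, htdef]
      congr 1
      ring
    calc (∑ i ∈ Finset.Icc 1 I, x ^ i) * K
        ≤ (2 * A ^ (e:ℝ) / c₀) * K := mul_le_mul_of_nonneg_right hgeom hK0
      _ = (2 / c₀) * (A ^ (e:ℝ) * K) := by ring
      _ = (2 / c₀) * Real.exp (-((α+β) * (L / mn))) * (n:ℝ) ^ (2 - α - β) := by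
          rw [hAK, hnef]; ring
      _ ≤ _ := by
          apply mul_le_mul_of_nonneg_right _ (Real.rpow_nonneg hn0.le _)
          have h1 : 0 ≤ 2 * L * Real.exp (-c * L) := by positivity
          linarith

/-- Geometric series tail estimate in the sparse-cut proof: with `m = o(log n)`
and `I = (1/2)log₂ n - 2 log₂ log n`, the sum
`∑_{i=1}^{I} (2^i √n log² n)^{1-(m+1)α/m} · n^{1-(m+1)β/m}` is `o(n^{2-α-β})`. -/
theorem cut_edges_sum_littleO (α β : ℝ)
    (hα0 : 0 < α) (hα1 : α < 1) (hβ0 : 0 < β) (hβ1 : β < 1 - α)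
    (m : ℕ → ℕ) (hm : ∀ n, 0 < m n)
    (hmo : (fun n : ℕ => (m n : ℝ)) =o[atTop] fun n : ℕ => Real.log n) :
    (fun n : ℕ =>
        ∑ i ∈ Finset.Icc 1 ⌊(1 / 2) * Real.logb 2 n - 2 * Real.logb 2 (Real.log n)⌋₊,
          ((2 : ℝ) ^ (i : ℕ) * Real.sqrt n * (Real.log n) ^ 2)
              ^ (1 - ((m n : ℝ) + 1) * α / (m n))
            * (n : ℝ) ^ (1 - ((m n : ℝ) + 1) * β / (m n)))
      =o[atTop] fun n : ℕ => (n : ℝ) ^ (2 - α - β) := by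
  have hM1 : 1 ≤ ⌈2*α/(1-α)⌉₊ := Nat.one_le_ceil_iff.mpr (div_pos (by linarith) (by linarith))
  have hM0 : (0:ℝ) < (⌈2*α/(1-α)⌉₊:ℝ) := by exact_mod_cast hM1
  set c : ℝ := min ((α+β)/(⌈2*α/(1-α)⌉₊:ℝ)) ((1-α)/2) with hcdef
  have hc0 : 0 < c := lt_min (div_pos (by linarith) hM0) (by linarith)
  have hx2gt : (1:ℝ) < 2 ^ ((1-α)/2 : ℝ) := by
    rw [show (1:ℝ) = 2 ^ (0:ℝ) by simp]
    exact Real.rpow_lt_rpow_of_exponent_lt one_lt_two (by linarith)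
  have hc₀0 : (0:ℝ) < 2 ^ ((1-α)/2 : ℝ) - 1 := by linarith
  set c₀ : ℝ := 2 ^ ((1-α)/2 : ℝ) - 1 with hc₀def
  set p : ℕ → ℝ := fun n =>
    2 * Real.log n * Real.exp (-c * Real.log n)
      + (2 / c₀) * Real.exp (-((α+β) * (Real.log n / (m n)))) with hpdef
  -- p tends to 0
  have hp1 : Tendsto (fun n : ℕ => 2 * Real.log n * Real.exp (-c * Real.log n)) atTop (𝓝 0) := by
    have hbase : Tendsto (fun y : ℝ => 2 * y * Real.exp (-c * y)) atTop (𝓝 0) := by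
      have h1 : Tendsto (fun z : ℝ => (2/c) * (z ^ (1:ℕ) * Real.exp (-z))) atTop (𝓝 0) := by
        have := (Real.tendsto_pow_mul_exp_neg_atTop_nhds_zero 1).const_mul (2/c)
        simpa using this
      have h2 : Tendsto (fun y : ℝ => c * y) atTop atTop :=
        Tendsto.const_mul_atTop hc0 tendsto_id
      have h3 := h1.comp h2
      have : (fun y : ℝ => (2/c) * ((c*y) ^ (1:ℕ) * Real.exp (-(c*y))))
          = fun y : ℝ => 2 * y * Real.exp (-c * y) := by
        funext y
        field_simp
      rwa [← this]
    exact hbase.comp (Real.tendsto_log_atTop.comp tendsto_natCast_atTop_atTop)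
  have hlm : Tendsto (fun n : ℕ => Real.log n / (m n)) atTop atTop := by
    rw [tendsto_atTop]
    intro b
    set ε : ℝ := 1 / (max b 1) with hεdef
    have hmax : (0:ℝ) < max b 1 := lt_of_lt_of_le one_pos (le_max_right _ _)
    have hε0 : 0 < ε := by positivity
    have h1 := hmo.def hε0
    filter_upwards [h1, eventually_ge_atTop 3] with n hn1 hn3
    have hL1 : 1 ≤ Real.log n := log_ge_one n hn3
    have hL0 : 0 < Real.log n := lt_of_lt_of_le one_pos hL1
    have hmn0 : (0:ℝ) < (m n : ℝ) := by exact_mod_cast hm n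
    have hn1' : (m n : ℝ) ≤ ε * Real.log n := by
      rwa [Real.norm_natCast, Real.norm_of_nonneg hL0.le] at hn1
    have : max b 1 ≤ Real.log n / (m n) := by
      rw [le_div_iff₀ hmn0]
      calc max b 1 * (m n : ℝ) ≤ max b 1 * (ε * Real.log n) :=
            mul_le_mul_of_nonneg_left hn1' hmax.le
        _ = Real.log n := by
            rw [hεdef]
            field_simp
    exact le_trans (le_max_left _ _) this
  have hp2 : Tendsto (fun n : ℕ => (2 / c₀) * Real.exp (-((α+β) * (Real.log n / (m n)))))
      atTop (𝓝 0) := by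
    have h1 : Tendsto (fun z : ℝ => -((α+β) * z)) atTop atBot := by
      apply tendsto_neg_atTop_atBot.comp
      exact Tendsto.const_mul_atTop (by linarith) tendsto_id
    have h2 := (Real.tendsto_exp_atBot.comp (h1.comp hlm)).const_mul (2 / c₀)
    simpa [Function.comp] using h2
  have hp0 : Tendsto p atTop (𝓝 0) := by
    have h := hp1.add hp2
    rw [hpdef]
    simpa [neg_mul] using h
  rw [isLittleO_iff]
  intro ε hε
  filter_upwards [hp0.eventually_lt_const hε, eventually_ge_atTop 3] with n hpn hn3
  have hn0 : (0:ℝ) < n := by exact_mod_cast Nat.lt_of_lt_of_le (by norm_num) hn3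
  have haux := aux_bound α β hα0 hα1 hβ0 hβ1 (m n) n (hm n) hn3
  have hS0 : 0 ≤ ∑ i ∈ Finset.Icc 1 ⌊(1 / 2) * Real.logb 2 n - 2 * Real.logb 2 (Real.log n)⌋₊,
      ((2 : ℝ) ^ (i : ℕ) * Real.sqrt n * (Real.log n) ^ 2)
          ^ (1 - ((m n : ℝ) + 1) * α / (m n))
        * (n : ℝ) ^ (1 - ((m n : ℝ) + 1) * β / (m n)) := by
    apply Finset.sum_nonneg
    intro i _
    have h1 : (0:ℝ) ≤ (2 : ℝ) ^ (i : ℕ) * Real.sqrt n * (Real.log n) ^ 2 := by positivity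
    exact mul_nonneg (Real.rpow_nonneg h1 _) (Real.rpow_nonneg hn0.le _)
  rw [Real.norm_of_nonneg hS0, Real.norm_of_nonneg (Real.rpow_nonneg hn0.le _)]
  calc _ ≤ p n * (n:ℝ) ^ (2 - α - β) := haux
    _ ≤ ε * (n:ℝ) ^ (2 - α - β) :=
        mul_le_mul_of_nonneg_right hpn.le (Real.rpow_nonneg hn0.le _)
end
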